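/- Let G be a group admitting a midpointed convexoid (for all g, h ∈ G, g lies in the intersection of all convex sets containing {gh, gh⁻¹}). Then for every convex set C and all g, h ∈ G and n > 0: if g ∈ C and gh^n ∈ C, then gh^i ∈ C for all 0 ≤ i ≤ n. -/

import Mathlib

open Pointwise

attribute [local instance] Classical.propDecidable

/-- The closure of a finite set `B`: intersection of all members of `𝒞` containing `B`. -/
def memClosure {G : Type*} (𝒞 : Set (Finset G)) (B : Finset G) : Set G :=
  {x | ∀ C ∈ 𝒞, B ⊆ C → x ∈ C}

/-- A convexoid: `∅` is a member, every finite set is contained in some member, and the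
corner addition property holds. -/
def IsConvexoid {G : Type*} (𝒞 : Set (Finset G)) : Prop :=
  (∅ : Finset G) ∈ 𝒞 ∧ (∀ B : Finset G, ∃ C ∈ 𝒞, B ⊆ C) ∧
    ∀ C ∈ 𝒞, ∀ D ∈ 𝒞, C ⊂ D → ∃ a ∈ D, a ∉ C ∧ insert a C ∈ 𝒞

/-- In a midpointed convexoid on a group, convex sets contain whole geometric
progressions between their elements: if `g ∈ C` and `g * h^n ∈ C` then `g * h^i ∈ C`
for all `0 ≤ i ≤ n`. -/
theorem stmt15 {G : Type*} [Group G] (𝒞 : Set (Finset G)) (hconv : IsConvexoid 𝒞)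
    (hmid : ∀ g h : G, g ∈ memClosure 𝒞 {g * h, g * h⁻¹}) :
    ∀ C ∈ 𝒞, ∀ g h : G, ∀ n : ℕ, 0 < n → g ∈ C → g * h ^ n ∈ C →
      ∀ i ≤ n, g * h ^ i ∈ C := by
  intro C hC g h n hn hg hgn
  obtain ⟨D, hD, hBD⟩ :=
    hconv.2.1 (C ∪ (Finset.range (n + 1)).image (fun i => g * h ^ i))
  have hCD : C ⊆ D := fun x hx => hBD (Finset.mem_union_left _ hx)
  have hTD : ∀ i ≤ n, g * h ^ i ∈ D := fun i hi =>
    hBD (Finset.mem_union_right _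
      (Finset.mem_image.2 ⟨i, Finset.mem_range.2 (Nat.lt_succ_of_le hi), rfl⟩))
  suffices H : ∀ m : ℕ, ∀ C' ∈ 𝒞, C' ⊆ D → (D \ C').card ≤ m → g ∈ C' →
      g * h ^ n ∈ C' → ∀ i ≤ n, g * h ^ i ∈ C' from
    H (D \ C).card C hC hCD le_rfl hg hgn
  intro m
  induction m with
  | zero =>
    intro C' hC' hsub hcard hg' hgn' i hi
    have hempty : D \ C' = ∅ := Finset.card_eq_zero.mp (Nat.le_zero.mp hcard)
    have hDC : D ⊆ C' := by
      intro x hx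
      by_contra hxc
      have : x ∈ D \ C' := Finset.mem_sdiff.2 ⟨hx, hxc⟩
      simp [hempty] at this
    exact hDC (hTD i hi)
  | succ m ih =>
    intro C' hC' hsub hcard hg' hgn' i hi
    by_cases hDsub : D ⊆ C'
    · exact hDsub (hTD i hi)
    · have hss : C' ⊂ D := ⟨hsub, hDsub⟩
      obtain ⟨a, haD, haC, hins⟩ := hconv.2.2 C' hC' D hD hss
      have hsub2 : insert a C' ⊆ D := Finset.insert_subset haD hsub
      have hcard2 : (D \ insert a C').card ≤ m := by
        have heq : D \ insert a C' = (D \ C').erase a := by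
          ext x
          simp only [Finset.mem_sdiff, Finset.mem_insert, Finset.mem_erase, not_or]
          tauto
        have hamem : a ∈ D \ C' := Finset.mem_sdiff.2 ⟨haD, haC⟩
        have h1 : (D \ insert a C').card = (D \ C').card - 1 := by
          rw [heq, Finset.card_erase_of_mem hamem]
        have h2 : 0 < (D \ C').card := Finset.card_pos.mpr ⟨a, hamem⟩
        omega
      have hall : ∀ j ≤ n, g * h ^ j ∈ insert a C' :=
        ih (insert a C') hins hsub2 hcard2 (Finset.mem_insert_of_mem hg')
          (Finset.mem_insert_of_mem hgn')
      rcases Finset.mem_insert.mp (hall i hi) with hia | hiC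
      · -- g * h ^ i = a; use the midpoint property
        exfalso
        have hi0 : i ≠ 0 := by
          rintro rfl
          simp only [pow_zero, mul_one] at hia
          exact haC (hia ▸ hg')
        have hin : i ≠ n := by
          rintro rfl
          exact haC (hia ▸ hgn')
        have hilt : i < n := lt_of_le_of_ne hi hin
        have hne1 : h ≠ 1 := by
          rintro rfl
          apply haC
          have : a = g := by
            rw [← hia]; simp
          rw [this]; exact hg'
        have hm1 : g * h ^ (i - 1) ∈ C' := by
          rcases Finset.mem_insert.mp (hall (i - 1) (le_trans (Nat.sub_le _ _) hi)) with
            h1 | h1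
          · exfalso
            rw [← hia] at h1
            have : h ^ (i - 1) = h ^ i := mul_left_cancel h1
            have hpw : h ^ i = h ^ (i - 1) * h := by
              rw [← pow_succ]
              congr 1
              omega
            rw [hpw] at this
            exact hne1 (by
              have := (left_eq_mul).mp this
              exact this)
          · exact h1
        have hp1 : g * h ^ (i + 1) ∈ C' := by
          rcases Finset.mem_insert.mp (hall (i + 1) (by omega)) with h1 | h1
          · exfalso
            rw [← hia] at h1
            have : h ^ (i + 1) = h ^ i := mul_left_cancel h1
            rw [pow_succ] at this
            exact hne1 ((left_eq_mul).mp this.symm)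
          · exact h1
        apply haC
        rw [← hia]
        refine hmid (g * h ^ i) h C' hC' ?_
        intro x hx
        rcases Finset.mem_insert.mp hx with rfl | hx
        · have : g * h ^ i * h = g * h ^ (i + 1) := by
            rw [pow_succ, ← mul_assoc]
          rw [this]; exact hp1
        · have hxe : x = g * h ^ i * h⁻¹ := Finset.mem_singleton.mp hx
          have : g * h ^ i * h⁻¹ = g * h ^ (i - 1) := by
            have hpw : h ^ i = h ^ (i - 1) * h := by
              rw [← pow_succ]; congr 1; omega
            rw [hpw, ← mul_assoc, mul_assoc, mul_inv_cancel, mul_one]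
          rw [hxe, this]; exact hm1
      · exact hiC
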